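/- arXiv:1801.05792 — 5 statements merged into one kernel-verified Lean document; each statement's English description precedes it below -/
import Mathlib

section
/- Let A be a set of alternatives with |A| ≥ 3, let X be the set of strict linear orders on A, let I = {1,...,N}, and let f : X^N → A be a social choice function that is unanimous and strategy-proof. If x ∈ X^N and a, b ∈ A are such that for every i ∈ I the top-ranked alternative of x_i lies in {a, b}, then f(x) ∈ {a, b}. (Tops only lemma) -/
/-- A strict linear order (complete, transitive, asymmetric binary relation) on `A`. -/
def Pref (A : Type*) : Type _ := {r : A → A → Prop // IsStrictTotalOrder A r}

/-- A profile of rankings for `N` individuals. -/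
def Profile (A : Type*) (N : ℕ) : Type _ := Fin N → Pref A

/-- `a` is ranked at the top of the ranking `p`. -/
def RanksTop {A : Type*} (p : Pref A) (a : A) : Prop := ∀ c, c ≠ a → p.1 a c

/-- `a` is ranked at the bottom of the ranking `p`. -/
def RanksBottom {A : Type*} (p : Pref A) (a : A) : Prop := ∀ c, c ≠ a → p.1 c a

/-- `a` is ranked second by `p`: above every alternative except exactly one. -/
def RanksSecond {A : Type*} (p : Pref A) (a : A) : Prop :=
  ∃ c, c ≠ a ∧ p.1 c a ∧ ∀ d, d ≠ a → d ≠ c → p.1 a d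

/-- `G` is decisive over `a` for the social choice function `f`. -/
def DecisiveOver {A : Type*} {N : ℕ} (f : Profile A N → A) (G : Set (Fin N)) (a : A) : Prop :=
  ∀ x : Profile A N, (∀ i ∈ G, RanksTop (x i) a) → f x = a

/-- `G` is decisive (over every alternative) for `f`. -/
def Decisive {A : Type*} {N : ℕ} (f : Profile A N → A) (G : Set (Fin N)) : Prop :=
  ∀ a : A, DecisiveOver f G a

/-- `f` is unanimous: the whole group of individuals is decisive. -/
def Unanimous {A : Type*} {N : ℕ} (f : Profile A N → A) : Prop :=
  Decisive f Set.univ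

/-- `f` is manipulable at `x` by `i` via `xi'`. -/
def ManipulableAt {A : Type*} {N : ℕ} (f : Profile A N → A)
    (x : Profile A N) (i : Fin N) (xi' : Pref A) : Prop :=
  (x i).1 (f (Function.update x i xi')) (f x)

/-- `f` is strategy-proof: not manipulable. -/
def StrategyProof {A : Type*} {N : ℕ} (f : Profile A N → A) : Prop :=
  ∀ (x : Profile A N) (i : Fin N) (xi' : Pref A), ¬ ManipulableAt f x i xi'

/-- `f` is dictatorial: some singleton group is decisive. -/
def Dictatorial {A : Type*} {N : ℕ} (f : Profile A N → A) : Prop :=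
  ∃ i : Fin N, Decisive f {i}

section TopsOnlyAux

variable {A : Type*} {N : ℕ}

def prom (a b : A) (p : Pref A) : Pref A :=
  ⟨fun y z => (y = a ∧ z ≠ a) ∨ (y = b ∧ z ≠ a ∧ z ≠ b) ∨
      (y ≠ a ∧ y ≠ b ∧ z ≠ a ∧ z ≠ b ∧ p.1 y z), by
    haveI := p.2
    refine { trichotomous := ?_, irrefl := ?_, trans := ?_ }
    · intro y z
      suffices H : (y = a ∧ z ≠ a ∨ y = b ∧ z ≠ a ∧ z ≠ b ∨ y ≠ a ∧ y ≠ b ∧ z ≠ a ∧ z ≠ b ∧ p.1 y z) ∨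
          y = z ∨ (z = a ∧ y ≠ a ∨ z = b ∧ y ≠ a ∧ y ≠ b ∨ z ≠ a ∧ z ≠ b ∧ y ≠ a ∧ y ≠ b ∧ p.1 z y) by
        exact fun h1 h2 => H.elim (fun h => absurd h h1) (fun h => h.elim id (fun h => absurd h h2))
      by_cases hyz : y = z
      · exact Or.inr (Or.inl hyz)
      by_cases hya : y = a
      · by_cases hza : z = a
        · exact absurd (hya.trans hza.symm) hyz
        · exact Or.inl (Or.inl ⟨hya, hza⟩)
      by_cases hza : z = a
      · exact Or.inr (Or.inr (Or.inl ⟨hza, hya⟩))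
      by_cases hyb : y = b
      · by_cases hzb : z = b
        · exact absurd (hyb.trans hzb.symm) hyz
        · exact Or.inl (Or.inr (Or.inl ⟨hyb, hza, hzb⟩))
      by_cases hzb : z = b
      · exact Or.inr (Or.inr (Or.inr (Or.inl ⟨hzb, hya, hyb⟩)))
      rcases trichotomous_of p.1 y z with h | h | h
      · exact Or.inl (Or.inr (Or.inr ⟨hya, hyb, hza, hzb, h⟩))
      · exact Or.inr (Or.inl h)
      · exact Or.inr (Or.inr (Or.inr (Or.inr ⟨hza, hzb, hya, hyb, h⟩)))
    · rintro y (⟨h1, h2⟩ | ⟨h1, _, h3⟩ | ⟨_, _, _, _, h⟩)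
      · exact h2 h1
      · exact h3 h1
      · exact irrefl_of p.1 y h
    · rintro y z w (⟨hy, hz⟩ | ⟨hy, hza, hzb⟩ | ⟨hya, hyb, hza, hzb, hp⟩) hzw
      · refine Or.inl ⟨hy, ?_⟩
        rcases hzw with ⟨_, h⟩ | ⟨_, h, _⟩ | ⟨_, _, h, _, _⟩ <;> exact h
      · rcases hzw with ⟨h, _⟩ | ⟨h, _, _⟩ | ⟨_, _, hwa, hwb, _⟩
        · exact absurd h hza
        · exact absurd h hzb
        · exact Or.inr (Or.inl ⟨hy, hwa, hwb⟩)
      · rcases hzw with ⟨h, _⟩ | ⟨h, _, _⟩ | ⟨_, _, hwa, hwb, hq⟩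
        · exact absurd h hza
        · exact absurd h hzb
        · exact Or.inr (Or.inr ⟨hya, hyb, hwa, hwb, trans_of p.1 hp hq⟩)⟩

lemma prom_top (a b : A) (p : Pref A) : RanksTop (prom a b p) a :=
  fun _ hc => Or.inl ⟨rfl, hc⟩

def GoodPair (a b : A) (p : Pref A) : Prop :=
  ∀ d, d ≠ a → d ≠ b → p.1 a d ∧ p.1 b d

lemma prom_good (a b : A) (p : Pref A) : GoodPair a b (prom a b p) :=
  fun _ h1 h2 => ⟨Or.inl ⟨rfl, h1⟩, Or.inr (Or.inl ⟨rfl, h1, h2⟩)⟩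

/-- Case: every voter topping `b` ranks `{a,b}` as top two. -/
lemma caseII (f : Profile A N → A) (hU : Unanimous f) (hS : StrategyProof f)
    (a b : A) (x : Profile A N)
    (htop : ∀ i, RanksTop (x i) a ∨ RanksTop (x i) b)
    (hgood : ∀ i, RanksTop (x i) b → GoodPair a b (x i)) :
    f x = a ∨ f x = b := by
  classical
  by_contra hcon
  push_neg at hcon
  obtain ⟨hfa, hfb⟩ := hcon
  set z : Profile A N := fun i => if RanksTop (x i) a then x i else prom a b (x i) with hz
  have hztop : ∀ i, RanksTop (z i) a := by
    intro i
    by_cases h : RanksTop (x i) a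
    · simpa [hz, h] using h
    · simp only [hz, if_neg h]
      exact prom_top a b (x i)
  set m : ℕ → Profile A N := fun k i => if (i : ℕ) < k then z i else x i with hm
  have key : ∀ k, f (m k) ≠ a ∧ f (m k) ≠ b := by
    intro k
    induction k with
    | zero =>
      have h0 : m 0 = x := by funext i; simp [hm]
      rw [h0]; exact ⟨hfa, hfb⟩
    | succ k ih =>
      by_cases hk : k < N
      · set j : Fin N := ⟨k, hk⟩ with hj
        have hmkj : m k j = x j := by simp [hm, hj]
        have hupd : Function.update (m k) j (z j) = m (k + 1) := by
          funext i
          by_cases hij : i = j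
          · subst hij; simp [hm, hj]
          · rw [Function.update_of_ne hij]
            have hvk : (i : ℕ) ≠ k := fun h => hij (Fin.ext (by simp [hj, h]))
            by_cases hik : (i : ℕ) < k
            · simp [hm, hik, Nat.lt_succ_of_lt hik]
            · have h2 : ¬ (i : ℕ) < k + 1 := by omega
              simp [hm, hik, h2]
        by_cases hxa : RanksTop (x j) a
        · have hzj : z j = x j := by simp [hz, hxa]
          have hmm : m (k + 1) = m k := by
            rw [← hupd, hzj, ← hmkj, Function.update_eq_self]
          rw [hmm]; exact ih
        · have hxb : RanksTop (x j) b := (htop j).resolve_left hxa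
          have hg := hgood j hxb
          have hsp := hS (m k) j (z j)
          unfold ManipulableAt at hsp
          rw [hupd, hmkj] at hsp
          constructor
          · intro h; exact hsp (by rw [h]; exact (hg _ ih.1 ih.2).1)
          · intro h; exact hsp (by rw [h]; exact (hg _ ih.1 ih.2).2)
      · have hmm : m (k + 1) = m k := by
          funext i
          have h1 : (i : ℕ) < k := lt_of_lt_of_le i.isLt (not_lt.mp hk)
          simp [hm, h1, Nat.lt_succ_of_lt h1]
        rw [hmm]; exact ih
  have hmN : m N = z := by
    funext i; simp [hm, i.isLt]
  exact (key N).1 (hU a (m N) (fun i _ => by rw [hmN]; exact hztop i))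

lemma main_ind (f : Profile A N → A) (hU : Unanimous f) (hS : StrategyProof f)
    (a b : A) (hab : a ≠ b) :
    ∀ n (x : Profile A N), (∀ i, RanksTop (x i) a ∨ RanksTop (x i) b) →
      {i : Fin N | ¬ GoodPair a b (x i)}.ncard ≤ n → f x = a ∨ f x = b := by
  intro n
  induction n with
  | zero =>
    intro x htop hc
    have hall : ∀ i, GoodPair a b (x i) := by
      intro i
      by_contra h
      have hpos : 0 < {i : Fin N | ¬ GoodPair a b (x i)}.ncard :=
        (Set.ncard_pos (Set.toFinite _)).mpr ⟨i, h⟩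
      omega
    exact caseII f hU hS a b x htop (fun i _ => hall i)
  | succ n ih =>
    intro x htop hc
    by_cases hB : ∀ i, RanksTop (x i) b → GoodPair a b (x i)
    · exact caseII f hU hS a b x htop hB
    by_cases hA : ∀ i, RanksTop (x i) a → GoodPair a b (x i)
    · have htop' : ∀ i, RanksTop (x i) b ∨ RanksTop (x i) a := fun i => (htop i).symm
      have hA' : ∀ i, RanksTop (x i) a → GoodPair b a (x i) := fun i hi d hdb hda =>
        ⟨(hA i hi d hda hdb).2, (hA i hi d hda hdb).1⟩
      exact (caseII f hU hS b a x htop' hA').symm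
    push_neg at hB hA
    obtain ⟨j2, hj2b, hj2g⟩ := hB
    obtain ⟨j1, hj1a, hj1g⟩ := hA
    by_contra hcon
    push_neg at hcon
    obtain ⟨hfa, hfb⟩ := hcon
    have hj12 : j1 ≠ j2 := by
      intro h
      subst h
      haveI := (x j1).2
      exact irrefl_of (x j1).1 a
        (trans_of (x j1).1 (hj1a b (Ne.symm hab)) (hj2b a hab))
    set p1 := prom a b (x j1) with hp1
    set p2 := prom b a (x j2) with hp2
    set y1 := Function.update x j1 p1 with hy1def
    set y2 := Function.update x j2 p2 with hy2def
    have hg1 : GoodPair a b p1 := prom_good a b (x j1)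
    have hg2 : GoodPair a b p2 := fun d hda hdb =>
      ⟨((prom_good b a (x j2)) d hdb hda).2, ((prom_good b a (x j2)) d hdb hda).1⟩
    -- outcome of y1 is b
    have count1 : ∀ (j : Fin N) (p : Pref A), GoodPair a b p →
        ¬ GoodPair a b (x j) →
        {i : Fin N | ¬ GoodPair a b ((Function.update x j p) i)}.ncard ≤ n := by
      intro j p hp hxj
      have hsub : {i : Fin N | ¬ GoodPair a b ((Function.update x j p) i)} ⊆
          {i : Fin N | ¬ GoodPair a b (x i)} \ {j} := by
        intro i hi
        have hij : i ≠ j := by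
          intro h; subst h
          erw [Set.mem_setOf_eq, Function.update_self] at hi
          exact hi hp
        erw [Set.mem_setOf_eq, Function.update_of_ne hij] at hi
        exact ⟨hi, hij⟩
      have h1 := Set.ncard_le_ncard hsub (Set.toFinite _)
      have h2 : ({i : Fin N | ¬ GoodPair a b (x i)} \ {j}).ncard =
          {i : Fin N | ¬ GoodPair a b (x i)}.ncard - 1 :=
        Set.ncard_diff_singleton_of_mem hxj
      have h3 : 0 < {i : Fin N | ¬ GoodPair a b (x i)}.ncard :=
        (Set.ncard_pos (Set.toFinite _)).mpr ⟨j, hxj⟩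
      omega
    have htop1 : ∀ i, RanksTop (y1 i) a ∨ RanksTop (y1 i) b := by
      intro i
      by_cases h : i = j1
      · subst h; erw [hy1def, Function.update_self]; exact Or.inl (prom_top a b (x i))
      · erw [hy1def, Function.update_of_ne h]; exact htop i
    have htop2 : ∀ i, RanksTop (y2 i) a ∨ RanksTop (y2 i) b := by
      intro i
      by_cases h : i = j2
      · subst h; erw [hy2def, Function.update_self]; exact Or.inr (prom_top b a (x i))
      · erw [hy2def, Function.update_of_ne h]; exact htop i
    have hy1ab := ih y1 htop1 (count1 j1 p1 hg1 hj1g)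
    have hy2ab := ih y2 htop2 (count1 j2 p2 hg2 hj2g)
    have hy1b : f y1 = b := by
      rcases hy1ab with h | h
      · exfalso
        have hsp := hS x j1 p1
        unfold ManipulableAt at hsp
        rw [← hy1def, h] at hsp
        exact hsp (hj1a (f x) hfa)
      · exact h
    have hy2a : f y2 = a := by
      rcases hy2ab with h | h
      · exact h
      · exfalso
        have hsp := hS x j2 p2
        unfold ManipulableAt at hsp
        rw [← hy2def, h] at hsp
        exact hsp (hj2b (f x) hfb)
    set y12 := Function.update y1 j2 p2 with hy12def
    have hy12' : y12 = Function.update y2 j1 p1 := by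
      rw [hy12def, hy1def, hy2def]
      exact Function.update_comm hj12 p1 p2 x
    have e1 : Function.update y12 j2 (x j2) = y1 := by
      rw [hy12def, Function.update_idem]
      have : x j2 = y1 j2 := (Function.update_of_ne (Ne.symm hj12) _ _).symm
      rw [this, Function.update_eq_self]
    have e2 : Function.update y12 j1 (x j1) = y2 := by
      rw [hy12', Function.update_idem]
      have : x j1 = y2 j1 := (Function.update_of_ne hj12 _ _).symm
      rw [this, Function.update_eq_self]
    have hb12 : f y12 = b := by
      by_contra h
      have hsp := hS y12 j2 (x j2)
      unfold ManipulableAt at hsp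
      rw [e1, hy1b] at hsp
      have hj2' : y12 j2 = p2 := by rw [hy12def, Function.update_self]
      rw [hj2'] at hsp
      exact hsp (prom_top b a (x j2) (f y12) h)
    have ha12 : f y12 = a := by
      by_contra h
      have hsp := hS y12 j1 (x j1)
      unfold ManipulableAt at hsp
      rw [e2, hy2a] at hsp
      have hj1' : y12 j1 = p1 := by rw [hy12', Function.update_self]
      rw [hj1'] at hsp
      exact hsp (prom_top a b (x j1) (f y12) h)
    exact hab (ha12.symm.trans hb12)


end TopsOnlyAux

/-- **Tops only lemma**: if every individual's top-ranked alternative lies in `{a, b}`,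
then the social choice lies in `{a, b}`. -/
theorem tops_only {A : Type*} {N : ℕ} (hA : 3 ≤ Cardinal.mk A)
    (f : Profile A N → A) (hUNM : Unanimous f) (hSTP : StrategyProof f)
    (x : Profile A N) (a b : A)
    (htop : ∀ i : Fin N, RanksTop (x i) a ∨ RanksTop (x i) b) :
    f x = a ∨ f x = b := by
  by_cases hab : a = b
  · subst hab
    exact Or.inl (hUNM a x (fun i _ => (htop i).elim id id))
  · exact main_ind f hUNM hSTP a b hab _ x htop le_rfl
end

section
/- Let A be a set of alternatives with |A| ≥ 3, let X be the set of strict linear orders on A, let I = {1,...,N}, and let f : X^N → A be a social choice function that is unanimous and strategy-proof. Let G ⊆ I and let x ∈ X^N be a profile such that a ∈ A is ranked at the top of x_i for all i ∈ G and at the bottom of x_j for all j ∈ I \ G. If f(x) = a, then G is decisive. (Extension lemma) -/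
namespace GSExtension

variable {A : Type*} {N : ℕ}

/-! ### Elementary facts about strict total orders -/

theorem rel_ne {r : Pref A} {x y : A} (h : r.1 x y) : x ≠ y := by
  rintro rfl
  exact r.2.irrefl x h

theorem rel_asymm {r : Pref A} {x y : A} (h : r.1 x y) (h' : r.1 y x) : False :=
  r.2.irrefl x (r.2.trans x y x h h')

theorem rel_total (r : Pref A) {x y : A} (h : x ≠ y) : r.1 x y ∨ r.1 y x := by
  rcases (haveI := r.2; trichotomous_of r.1 x y) with h1 | h1 | h1
  · exact Or.inl h1
  · exact absurd h1 h
  · exact Or.inr h1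

/-! ### Order surgery: moving an element to the top or bottom -/

/-- The relation obtained from `r` by moving `a` to the top. -/
def mt (a : A) (r : A → A → Prop) : A → A → Prop :=
  fun x y => (x = a ∧ y ≠ a) ∨ (x ≠ a ∧ y ≠ a ∧ r x y)

/-- The relation obtained from `r` by moving `a` to the bottom. -/
def mb (a : A) (r : A → A → Prop) : A → A → Prop :=
  fun x y => (x ≠ a ∧ y = a) ∨ (x ≠ a ∧ y ≠ a ∧ r x y)

theorem mt_sto (a : A) (r : A → A → Prop) (hr : IsStrictTotalOrder A r) :
    IsStrictTotalOrder A (mt a r) := by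
  refine { trichotomous := ?_, irrefl := ?_, trans := ?_ }
  · intro x y
    suffices H : mt a r x y ∨ x = y ∨ mt a r y x by
      intro h1 h2
      exact H.elim (fun h => absurd h h1) (fun H => H.elim id (fun h => absurd h h2))
    by_cases hx : x = a
    · by_cases hy : y = a
      · exact Or.inr (Or.inl (hx.trans hy.symm))
      · exact Or.inl (Or.inl ⟨hx, hy⟩)
    · by_cases hy : y = a
      · exact Or.inr (Or.inr (Or.inl ⟨hy, hx⟩))
      · rcases (haveI := hr; trichotomous_of r x y) with h | h | h
        · exact Or.inl (Or.inr ⟨hx, hy, h⟩)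
        · exact Or.inr (Or.inl h)
        · exact Or.inr (Or.inr (Or.inr ⟨hy, hx, h⟩))
  · intro x h
    rcases h with ⟨h1, h2⟩ | ⟨_, _, h3⟩
    · exact h2 h1
    · exact hr.irrefl x h3
  · intro x y z hxy hyz
    rcases hxy with ⟨hx, hy⟩ | ⟨hx, hy, h1⟩
    · rcases hyz with ⟨hy', _⟩ | ⟨_, hz, _⟩
      · exact absurd hy' hy
      · exact Or.inl ⟨hx, hz⟩
    · rcases hyz with ⟨hy', _⟩ | ⟨_, hz, h2⟩
      · exact absurd hy' hy
      · exact Or.inr ⟨hx, hz, hr.trans x y z h1 h2⟩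

theorem mb_sto (a : A) (r : A → A → Prop) (hr : IsStrictTotalOrder A r) :
    IsStrictTotalOrder A (mb a r) := by
  refine { trichotomous := ?_, irrefl := ?_, trans := ?_ }
  · intro x y
    suffices H : mb a r x y ∨ x = y ∨ mb a r y x by
      intro h1 h2
      exact H.elim (fun h => absurd h h1) (fun H => H.elim id (fun h => absurd h h2))
    by_cases hx : x = a
    · by_cases hy : y = a
      · exact Or.inr (Or.inl (hx.trans hy.symm))
      · exact Or.inr (Or.inr (Or.inl ⟨hy, hx⟩))
    · by_cases hy : y = a
      · exact Or.inl (Or.inl ⟨hx, hy⟩)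
      · rcases (haveI := hr; trichotomous_of r x y) with h | h | h
        · exact Or.inl (Or.inr ⟨hx, hy, h⟩)
        · exact Or.inr (Or.inl h)
        · exact Or.inr (Or.inr (Or.inr ⟨hy, hx, h⟩))
  · intro x h
    rcases h with ⟨h1, h2⟩ | ⟨_, _, h3⟩
    · exact h1 h2
    · exact hr.irrefl x h3
  · intro x y z hxy hyz
    rcases hxy with ⟨hx, hy⟩ | ⟨hx, hy, h1⟩
    · rcases hyz with ⟨hy', _⟩ | ⟨hy', _, _⟩
      · exact absurd hy hy'
      · exact absurd hy hy'
    · rcases hyz with ⟨_, hz⟩ | ⟨_, hz, h2⟩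
      · exact Or.inl ⟨hx, hz⟩
      · exact Or.inr ⟨hx, hz, hr.trans x y z h1 h2⟩

/-- Move `a` to the top of a ranking. -/
def Mt (a : A) (r : Pref A) : Pref A := ⟨mt a r.1, mt_sto a r.1 r.2⟩

/-- Move `a` to the bottom of a ranking. -/
def Mb (a : A) (r : Pref A) : Pref A := ⟨mb a r.1, mb_sto a r.1 r.2⟩

/-- A fixed base ranking of `A`. -/
noncomputable def base (A : Type*) : Pref A := ⟨WellOrderingRel, inferInstance⟩

theorem Mt_top (a : A) (r : Pref A) : RanksTop (Mt a r) a := by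
  intro c hc
  exact Or.inl ⟨rfl, hc⟩

theorem Mb_bot (a : A) (r : Pref A) : RanksBottom (Mb a r) a := by
  intro c hc
  exact Or.inl ⟨hc, rfl⟩

/-- In `a ≻ … ≻ b`, the alternative `b` is still at the bottom. -/
theorem Mt_Mb_bot {a b : A} (hba : b ≠ a) (r : Pref A) : RanksBottom (Mt a (Mb b r)) b := by
  intro c hc
  by_cases hca : c = a
  · exact Or.inl ⟨hca, hba⟩
  · exact Or.inr ⟨hca, hba, Or.inl ⟨hc, rfl⟩⟩

/-- In `a ≻ b ≻ …`, the alternative `b` is above anything other than `a`. -/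
theorem Mt_Mt_second {a b : A} (hba : b ≠ a) (r : Pref A) :
    ∀ d, d ≠ a → d ≠ b → (Mt a (Mt b r)).1 b d := by
  intro d hda hdb
  exact Or.inr ⟨hba, hda, Or.inl ⟨rfl, hdb⟩⟩

/-! ### Consequences of strategy-proofness -/

variable {f : Profile A N → A}

/-- One-voter monotonicity: if voter `i`'s new ranking keeps the outcome above everything
it used to be above, the outcome is unchanged. -/
theorem mono (hSTP : StrategyProof f) (x : Profile A N) (i : Fin N) (p : Pref A)
    (h : ∀ e, (x i).1 (f x) e → p.1 (f x) e) :
    f (Function.update x i p) = f x := by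
  by_contra hne
  have h1 : ¬ (x i).1 (f (Function.update x i p)) (f x) := hSTP x i p
  have h2 : ¬ p.1 (f x) (f (Function.update x i p)) := by
    have h3 := hSTP (Function.update x i p) i (x i)
    unfold ManipulableAt at h3
    have e1 : Function.update (Function.update x i p) i (x i) = x :=
      (Function.update_idem (a := i) p (x i) (x : Fin N → Pref A)).trans
        (Function.update_eq_self i (x : Fin N → Pref A))
    have e2 : Function.update x i p i = p := Function.update_self i p (x : Fin N → Pref A)
    rwa [e1, e2] at h3
  rcases rel_total (x i) (fun he => hne he.symm) with h4 | h4
  · exact h2 (h (f (Function.update x i p)) h4)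
  · exact h1 h4

/-- Maskin monotonicity: if every voter's new ranking keeps the outcome `d = f x` above
everything it used to be above, the outcome is unchanged. -/
theorem mm (hSTP : StrategyProof f) {x y : Profile A N} {d : A} (hx : f x = d)
    (h : ∀ i e, (x i).1 d e → (y i).1 d e) : f y = d := by
  classical
  let z : ℕ → Profile A N := fun k i => if (i : ℕ) < k then y i else x i
  have hz : ∀ k, f (z k) = d := by
    intro k
    induction k with
    | zero =>
      have : z 0 = x := by
        funext i
        simp [z]
      rwa [this]
    | succ k ih =>
      by_cases hk : k < N
      · have hzi : z k ⟨k, hk⟩ = x ⟨k, hk⟩ := by simp [z]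
        have hstep : z (k + 1) = Function.update (z k) ⟨k, hk⟩ (y ⟨k, hk⟩) := by
          funext i
          by_cases hik : i = ⟨k, hk⟩
          · subst hik
            simp [z, Function.update_self]
          · have hik' : (i : ℕ) ≠ k := by
              intro hc
              exact hik (Fin.ext hc)
            rw [Function.update_of_ne hik]
            simp only [z]
            by_cases hlt : (i : ℕ) < k
            · rw [if_pos hlt, if_pos (Nat.lt_succ_of_lt hlt)]
            · rw [if_neg hlt, if_neg (by omega)]
        rw [hstep]
        have := mono hSTP (z k) ⟨k, hk⟩ (y ⟨k, hk⟩) ?_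
        · rw [this, ih]
        · intro e he
          rw [ih] at he ⊢
          rw [hzi] at he
          exact h _ e he
      · have : z (k + 1) = z k := by
          funext i
          have hi : (i : ℕ) < k := lt_of_lt_of_le i.isLt (Nat.le_of_not_lt hk)
          simp only [z]
          rw [if_pos hi, if_pos (Nat.lt_succ_of_lt hi)]
        rw [this, ih]
  have : z N = y := by
    funext i
    simp [z, i.isLt]
  rw [← this, hz N]

/-- Pareto efficiency: the outcome is never unanimously dominated. -/
theorem pareto (hUNM : Unanimous f) (hSTP : StrategyProof f) {x : Profile A N} {α d : A}
    (hd : f x = d) (hne : d ≠ α) (h : ∀ i, (x i).1 α d) : False := by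
  set Z : Profile A N := fun i => Mt α (Mt d (x i)) with hZ
  have h1 : f Z = d := by
    apply mm hSTP hd
    intro i e he
    have hed : e ≠ d := (rel_ne he).symm
    have heα : e ≠ α := by
      rintro rfl
      exact rel_asymm he (h i)
    exact Or.inr ⟨hne, heα, Or.inl ⟨rfl, hed⟩⟩
  have h2 : f Z = α := hUNM α Z (fun i _ => Mt_top α _)
  rw [h1] at h2
  exact hne h2

/-- The base extension step: if `f` picks `α` at a profile where `α` is at the top for
members of `D` and at the bottom elsewhere, then `D` is decisive over `α`. -/
theorem ext_base (hSTP : StrategyProof f) (D : Set (Fin N)) (V : Profile A N) (α : A)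
    (_ht : ∀ i ∈ D, RanksTop (V i) α) (hb : ∀ j ∉ D, RanksBottom (V j) α)
    (hv : f V = α) : DecisiveOver f D α := by
  intro y hy
  apply mm hSTP hv
  intro i e he
  have heα : e ≠ α := (rel_ne he).symm
  by_cases hiD : i ∈ D
  · exact hy i hiD e heα
  · exact absurd (hb i hiD e heα) (fun h' => rel_asymm he h')

/-- The dichotomy: for any group `D` and distinct `α β`, either `D` is decisive over `β`
or its complement is decisive over `α`. -/
theorem dichotomy (hUNM : Unanimous f) (hSTP : StrategyProof f)
    (D : Set (Fin N)) (α β : A) (hab : α ≠ β) :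
    DecisiveOver f D β ∨ DecisiveOver f Dᶜ α := by
  classical
  set pβα : Pref A := Mt β (Mt α (base A)) with hpβα
  set pαβ : Pref A := Mt α (Mt β (base A)) with hpαβ
  set pα_β : Pref A := Mt α (Mb β (base A)) with hpα_β
  set pβ_α : Pref A := Mt β (Mb α (base A)) with hpβ_α
  set V : Profile A N := fun i => if i ∈ D then pβα else pα_β with hV
  set U : Profile A N := fun i => if i ∈ D then pβ_α else pαβ with hU
  set Z : Profile A N := fun i => if i ∈ D then pβα else pαβ with hZ
  -- f V ∈ {α, β}
  have hVab : f V = α ∨ f V = β := by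
    by_contra hc
    push_neg at hc
    refine pareto hUNM hSTP rfl hc.1 ?_
    intro i
    simp only [hV]
    by_cases hiD : i ∈ D
    · rw [if_pos hiD]
      exact Mt_Mt_second hab (base A) (f V) hc.2 hc.1
    · rw [if_neg hiD]
      exact Mt_top α _ (f V) hc.1
  rcases hVab with hVα | hVβ
  swap
  · -- f V = β : D is decisive over β
    left
    refine ext_base hSTP D V β ?_ ?_ hVβ
    · intro i hiD
      simp only [hV]
      rw [if_pos hiD]
      exact Mt_top β _
    · intro j hjD
      simp only [hV]
      rw [if_neg hjD]
      exact Mt_Mb_bot (Ne.symm hab) (base A)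
  · -- f V = α : look at U
    have hUab : f U = α ∨ f U = β := by
      by_contra hc
      push_neg at hc
      refine pareto hUNM hSTP rfl hc.2 ?_
      intro i
      simp only [hU]
      by_cases hiD : i ∈ D
      · rw [if_pos hiD]
        exact Mt_top β _ (f U) hc.2
      · rw [if_neg hiD]
        exact Mt_Mt_second (Ne.symm hab) (base A) (f U) hc.1 hc.2
    rcases hUab with hUα | hUβ
    · -- f U = α : Dᶜ is decisive over α
      right
      refine ext_base hSTP Dᶜ U α ?_ ?_ hUα
      · intro i hiD
        simp only [hU]
        rw [if_neg (by simpa using hiD)]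
        exact Mt_top α _
      · intro j hjD
        simp only [hU]
        rw [if_pos (by simpa using hjD)]
        exact Mt_Mb_bot hab (base A)
    · -- f V = α and f U = β : contradiction via Z
      exfalso
      have h1 : f Z = α := by
        apply mm hSTP hVα
        intro i e he
        have heα : e ≠ α := by
          have : (V i).1 α e := he
          exact (rel_ne this).symm
        simp only [hV] at he
        simp only [hZ]
        by_cases hiD : i ∈ D
        · rw [if_pos hiD] at he ⊢
          exact he
        · rw [if_neg hiD]
          exact Mt_top α _ e heα
      have h2 : f Z = β := by
        apply mm hSTP hUβ
        intro i e he
        have heβ : e ≠ β := by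
          have : (U i).1 β e := he
          exact (rel_ne this).symm
        simp only [hU] at he
        simp only [hZ]
        by_cases hiD : i ∈ D
        · rw [if_pos hiD] at he ⊢
          exact Mt_top β _ e heβ
        · rw [if_neg hiD] at he ⊢
          exact he
      rw [h1] at h2
      exact hab h2

/-- Two disjoint groups cannot be decisive over two different alternatives. -/
theorem disjoint_dec (D D' : Set (Fin N)) (β β' : A) (hne : β ≠ β')
    (hdisj : ∀ i, i ∈ D → i ∈ D' → False)
    (h1 : DecisiveOver f D β) (h2 : DecisiveOver f D' β') : False := by
  classical
  set P : Profile A N := fun i => if i ∈ D then Mt β (base A) else Mt β' (base A) with hP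
  have e1 : f P = β := by
    apply h1
    intro i hiD
    simp only [hP]
    rw [if_pos hiD]
    exact Mt_top β _
  have e2 : f P = β' := by
    apply h2
    intro i hiD'
    have hiD : i ∉ D := fun h => hdisj i h hiD'
    simp only [hP]
    rw [if_neg hiD]
    exact Mt_top β' _
  rw [e1] at e2
  exact hne e2

end GSExtension

/-- **Extension lemma**: if `a` is ranked top by every member of `G` and bottom by every
individual outside `G`, and `f` chooses `a` at this profile, then `G` is decisive. -/
theorem extension_lemma {A : Type*} {N : ℕ} (hA : 3 ≤ Cardinal.mk A)
    (f : Profile A N → A) (hUNM : Unanimous f) (hSTP : StrategyProof f)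
    (G : Set (Fin N)) (x : Profile A N) (a : A)
    (htop : ∀ i ∈ G, RanksTop (x i) a)
    (hbot : ∀ j ∉ G, RanksBottom (x j) a)
    (hfa : f x = a) :
    Decisive f G := by
  have hGa : DecisiveOver f G a := GSExtension.ext_base hSTP G x a htop hbot hfa
  intro b
  by_cases hba : b = a
  · rw [hba]; exact hGa
  · obtain ⟨c, hca, hcb⟩ := Cardinal.three_le hA a b
    rcases GSExtension.dichotomy hUNM hSTP G c b hcb with h | h
    · exact h
    · exact absurd h (fun h' => GSExtension.disjoint_dec G Gᶜ a c (Ne.symm hca)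
        (fun i hi hic => hic hi) hGa h')
end

section
/- Let A be a set of alternatives with |A| ≥ 3, let X be the set of strict linear orders on A, let I = {1,...,N}, and let f : X^N → A be a social choice function that is unanimous and strategy-proof. If a group G ⊆ I with |G| ≥ 2 is decisive, then G has a proper subset which is decisive. (Contraction lemma) -/
/- ======================  Auxiliary development  ====================== -/

namespace GSAux

open scoped Classical

variable {A : Type*} {N : ℕ}

/-! ### Basic facts about strict total orders -/

lemma pref_ne {p : Pref A} {x y : A} (h : p.1 x y) : x ≠ y := by
  rintro rfl
  exact p.2.toIsStrictOrder.toIrrefl.irrefl x h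

lemma pref_asymm {p : Pref A} {x y : A} (h : p.1 x y) (h' : p.1 y x) : False :=
  p.2.toIsStrictOrder.toIrrefl.irrefl x (p.2.toIsStrictOrder.toIsTrans.trans _ _ _ h h')

lemma pref_total (p : Pref A) {x y : A} (h : x ≠ y) : p.1 x y ∨ p.1 y x := by
  rcases (Std.Trichotomous.rel_or_eq_or_rel_swap (i := p.2.toTrichotomous) (a := x) (b := y)) with h1 | h1 | h1
  · exact Or.inl h1
  · exact absurd h1 h
  · exact Or.inr h1

lemma mkTri {r : A → A → Prop} (h : ∀ a b, r a b ∨ a = b ∨ r b a) : Std.Trichotomous r :=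
  Std.trichotomous_of_rel_or_eq_or_rel_swap (fun {a b} => h a b)

/-! ### Orders built from score functions (lower score = better) -/

noncomputable def sOrd (s : A → ℕ) : Pref A :=
  ⟨fun x y => s x < s y ∨ (s x = s y ∧ WellOrderingRel x y),
   { toTrichotomous := mkTri (by
       intro x y
       rcases lt_trichotomy (s x) (s y) with h | h | h
       · exact Or.inl (Or.inl h)
       · rcases (Std.Trichotomous.rel_or_eq_or_rel_swap (i := (inferInstance : IsStrictTotalOrder A WellOrderingRel).toTrichotomous) (a := x) (b := y)) with
           h2 | h2 | h2
         · exact Or.inl (Or.inr ⟨h, h2⟩)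
         · exact Or.inr (Or.inl h2)
         · exact Or.inr (Or.inr (Or.inr ⟨h.symm, h2⟩))
       · exact Or.inr (Or.inr (Or.inl h)))
     toIsStrictOrder :=
     { toIrrefl := ⟨by
         intro x h
         rcases h with h | ⟨_, h⟩
         · exact lt_irrefl _ h
         · exact (inferInstance : IsStrictTotalOrder A WellOrderingRel).toIsStrictOrder.toIrrefl.irrefl x h⟩
       toIsTrans := ⟨by
         intro x y z hxy hyz
         rcases hxy with h1 | ⟨h1, h1'⟩ <;> rcases hyz with h2 | ⟨h2, h2'⟩
         · exact Or.inl (h1.trans h2)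
         · exact Or.inl (h1.trans_eq h2)
         · exact Or.inl (h1.trans_lt h2)
         · exact Or.inr ⟨h1.trans h2,
             (inferInstance : IsStrictTotalOrder A WellOrderingRel).toIsStrictOrder.toIsTrans.trans
               _ _ _ h1' h2'⟩⟩ } }⟩

lemma sOrd_lt {s : A → ℕ} {x y : A} (h : s x < s y) : (sOrd s).1 x y := Or.inl h

lemma sOrd_le {s : A → ℕ} {x y : A} (h : (sOrd s).1 x y) : s x ≤ s y := by
  rcases h with h | ⟨h, _⟩
  · exact le_of_lt h
  · exact le_of_eq h

lemma sOrd_top {s : A → ℕ} {u : A} (h : ∀ c, c ≠ u → s u < s c) : RanksTop (sOrd s) u :=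
  fun c hc => Or.inl (h c hc)

/-- Raise `γ` to the top of `p`, otherwise unchanged. -/
noncomputable def pull (γ : A) (p : Pref A) : Pref A :=
  ⟨fun x y => (x = γ ∧ y ≠ γ) ∨ (x ≠ γ ∧ y ≠ γ ∧ p.1 x y),
   { toTrichotomous := mkTri (by
       intro x y
       by_cases hx : x = γ <;> by_cases hy : y = γ
       · exact Or.inr (Or.inl (hx.trans hy.symm))
       · exact Or.inl (Or.inl ⟨hx, hy⟩)
       · exact Or.inr (Or.inr (Or.inl ⟨hy, hx⟩))
       · rcases (Std.Trichotomous.rel_or_eq_or_rel_swap (i := p.2.toTrichotomous) (a := x) (b := y)) with h | h | h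
         · exact Or.inl (Or.inr ⟨hx, hy, h⟩)
         · exact Or.inr (Or.inl h)
         · exact Or.inr (Or.inr (Or.inr ⟨hy, hx, h⟩)))
     toIsStrictOrder :=
     { toIrrefl := ⟨by
         rintro x (⟨h1, h2⟩ | ⟨_, _, h⟩)
         · exact h2 h1
         · exact p.2.toIsStrictOrder.toIrrefl.irrefl x h⟩
       toIsTrans := ⟨by
         rintro x y z (⟨hx, hy⟩ | ⟨hx, hy, hxy⟩) (⟨hy', hz⟩ | ⟨hy', hz, hyz⟩)
         · exact absurd hy' hy
         · exact Or.inl ⟨hx, hz⟩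
         · exact absurd hy' hy
         · exact Or.inr ⟨hx, hz, p.2.toIsStrictOrder.toIsTrans.trans _ _ _ hxy hyz⟩⟩ } }⟩

lemma pull_top (γ : A) (p : Pref A) : RanksTop (pull γ p) γ :=
  fun c hc => Or.inl ⟨rfl, hc⟩

lemma pull_keep {γ : A} {p : Pref A} {x y : A} (hx : x ≠ γ) (hy : y ≠ γ) (h : p.1 x y) :
    (pull γ p).1 x y := Or.inr ⟨hx, hy, h⟩

/-! ### Consequences of strategy-proofness -/

variable {f : Profile A N → A}

/-- Two-sided strategy-proofness constraint on a one-agent change. -/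
lemma step (hSTP : StrategyProof f) {x : Profile A N} {w : A} (j : Fin N) (p : Pref A)
    (hxw : f x = w) :
    f (Function.update x j p) = w ∨
      ((x j).1 w (f (Function.update x j p)) ∧ p.1 (f (Function.update x j p)) w) := by
  set w' := f (Function.update x j p) with hw'
  have h1 : ¬ (x j).1 w' w := by
    have h := hSTP x j p
    unfold ManipulableAt at h
    rwa [hxw] at h
  have h2 : ¬ p.1 w w' := by
    have h := hSTP (Function.update x j p) j (x j)
    unfold ManipulableAt at h
    rw [show Function.update (Function.update x j p) j (x j) = x from
        (Function.update_idem _ _ _).trans (Function.update_eq_self _ _), hxw,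
      show Function.update x j p j = p from Function.update_self _ _ _] at h
    exact h
  by_cases hww : w' = w
  · exact Or.inl hww
  · right
    constructor
    · rcases pref_total (x j) (Ne.symm hww) with h | h
      · exact h
      · exact absurd h h1
    · rcases pref_total p hww with h | h
      · exact h
      · exact absurd h h2

/-- One-agent Maskin monotonicity. -/
lemma mm1 (hSTP : StrategyProof f) {x : Profile A N} {w : A} {j : Fin N} {p : Pref A}
    (hxw : f x = w) (hsub : ∀ w', (x j).1 w w' → p.1 w w') :
    f (Function.update x j p) = w := by
  rcases step hSTP j p hxw with h | ⟨h1, h2⟩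
  · exact h
  · exact absurd h2 (fun h2 => pref_asymm (hsub _ h1) h2)

/-- Maskin monotonicity (full profile version). -/
lemma mm (hSTP : StrategyProof f) {x y : Profile A N} {w : A}
    (hxw : f x = w) (hsub : ∀ j w', (x j).1 w w' → (y j).1 w w') : f y = w := by
  have key : ∀ (s : Finset (Fin N)) (x : Profile A N),
      (∀ j w', (x j).1 w w' → (y j).1 w w') → (∀ j, j ∉ s → x j = y j) → f x = w → f y = w := by
    intro s
    induction s using Finset.induction_on with
    | empty =>
        intro x _ hagree hxw
        have hxy : x = y := funext fun j => hagree j (Finset.notMem_empty j)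
        rwa [← hxy]
    | @insert j s hj ih =>
        intro x hs hagree hxw
        have hupd : f (Function.update x j (y j)) = w := mm1 hSTP hxw (hs j)
        refine ih (Function.update x j (y j)) ?_ ?_ hupd
        · intro k w' hk
          by_cases hkj : k = j
          · subst hkj; rwa [show Function.update x k (y k) k = y k from Function.update_self _ _ _] at hk
          · rw [show Function.update x j (y j) k = x k from Function.update_of_ne hkj _ _] at hk; exact hs k w' hk
        · intro k hk
          by_cases hkj : k = j
          · subst hkj; rw [show Function.update x k (y k) k = y k from Function.update_self _ _ _]
          · rw [show Function.update x j (y j) k = x k from Function.update_of_ne hkj _ _]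
            exact hagree k (by simp [Finset.mem_insert, hkj, hk])
  exact key Finset.univ x hsub (fun j hj => absurd (Finset.mem_univ j) hj) hxw

/-- Pareto: if everyone ranks `v` above `d`, then `f ≠ d`. -/
lemma par (hSTP : StrategyProof f) (hUNM : Unanimous f) {x : Profile A N} {v d : A}
    (hvd : v ≠ d) (h : ∀ j, (x j).1 v d) (hx : f x = d) : False := by
  set y : Profile A N := fun _ => sOrd (fun t => if t = v then 0 else if t = d then 1 else 2)
    with hy
  have hyd : f y = d := by
    refine mm hSTP hx ?_
    intro j w' hw'
    have h1 : w' ≠ d := (pref_ne hw').symm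
    have h2 : w' ≠ v := by rintro rfl; exact pref_asymm (h j) hw'
    apply sOrd_lt
    simp [h1, h2, hvd.symm]
  have hyv : f y = v := by
    refine hUNM v y (fun i _ => ?_)
    apply sOrd_top
    intro c hc
    rcases eq_or_ne c d with rfl | hcd
    · simp [hc, hvd]
    · simp [hc, hcd, hvd]
  exact hvd (hyv.symm.trans hyd)

/-- If a coalition decisive over `γ` unanimously ranks `γ` above `β`, then `f ≠ β`. -/
lemma kill (hSTP : StrategyProof f) {X : Set (Fin N)} {γ β : A}
    (hX : DecisiveOver f X γ) {z : Profile A N} (hz : ∀ j, j ∈ X → (z j).1 γ β)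
    (hne : γ ≠ β) : f z ≠ β := by
  intro hfz
  set y : Profile A N := fun j => if j ∈ X then pull γ (z j) else z j with hy
  have h1 : f y = β := by
    refine mm hSTP hfz ?_
    intro j w' hw'
    by_cases hj : j ∈ X
    · simp only [hy, if_pos hj]
      refine pull_keep hne.symm ?_ hw'
      rintro rfl
      exact pref_asymm (hz j hj) hw'
    · simpa only [hy, if_neg hj] using hw'
  have h2 : f y = γ := by
    refine hX y (fun k hk => ?_)
    simp only [hy, if_pos hk]
    exact pull_top γ (z k)
  exact hne (h2.symm.trans h1)

/-! ### Canonical two-group profiles -/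

/-- `u` first, `v` second, everything else below. -/
noncomputable def ord2 (u v : A) : Pref A :=
  sOrd (fun t => if t = u then 0 else if t = v then 1 else 2)

/-- `v` at top, `u` at bottom, everything else in between. -/
noncomputable def ordTB (v u : A) : Pref A :=
  sOrd (fun t => if t = v then 0 else if t = u then 2 else 1)

/-- `u` at top. -/
noncomputable def ordTop (u : A) : Pref A :=
  sOrd (fun t => if t = u then 0 else 1)

lemma ordTop_top (u : A) : RanksTop (ordTop u) u := by
  apply sOrd_top
  intro c hc
  simp [hc]

lemma ordTB_u_no {v u : A} (huv : u ≠ v) (w' : A) : ¬ (ordTB v u).1 u w' := by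
  intro h
  have hne : w' ≠ u := (pref_ne h).symm
  have hle := sOrd_le h
  rcases eq_or_ne w' v with rfl | h2
  · simp [huv, hne] at hle
  · simp [huv, hne, h2] at hle

/-- The canonical profile: members of `T` rank `u ≻ v ≻ rest`, the others `v ≻ u ≻ rest`. -/
noncomputable def can (T : Set (Fin N)) (u v : A) : Profile A N :=
  fun j => if j ∈ T then ord2 u v else ord2 v u

lemma can_flip (T : Set (Fin N)) (u v : A) : can T u v = can Tᶜ v u := by
  funext j
  by_cases hj : j ∈ T <;> simp [can, hj]

/-- At the canonical profile the outcome is `u` or `v`. -/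
lemma can_mem (hSTP : StrategyProof f) (hUNM : Unanimous f) {T : Set (Fin N)} {u v : A}
    (huv : u ≠ v) : f (can T u v) = u ∨ f (can T u v) = v := by
  by_contra hcon
  push_neg at hcon
  obtain ⟨hu, hv⟩ := hcon
  refine par hSTP hUNM (Ne.symm hu) (x := can T u v) (fun j => ?_) rfl
  by_cases hj : j ∈ T
  · simp only [can, if_pos hj, ord2]
    apply sOrd_lt
    simp [hu, hv, Ne.symm hu, Ne.symm hv]
  · simp only [can, if_neg hj, ord2]
    apply sOrd_lt
    simp [hu, hv, Ne.symm hu, Ne.symm hv, huv]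

/-- MAIN: if `T` wins the canonical contest, `T` is decisive over `u`. -/
lemma main (hSTP : StrategyProof f) (hUNM : Unanimous f) {T : Set (Fin N)} {u v : A}
    (huv : u ≠ v) (hcan : f (can T u v) = u) : DecisiveOver f T u := by
  -- descend u to the bottom at the agents outside T
  set dpf : Finset (Fin N) → Profile A N :=
    fun S j => if j ∈ T then ord2 u v else if j ∈ S then ordTB v u else ord2 v u with hdpf
  have hdesc : ∀ S : Finset (Fin N), f (dpf S) = u := by
    intro S
    induction S using Finset.induction_on with
    | empty =>
        have : dpf ∅ = can T u v := by
          funext k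
          by_cases hk : k ∈ T <;> simp [hdpf, can, hk]
        rw [this]; exact hcan
    | @insert j S hj ih =>
        by_cases hjT : j ∈ T
        · have : dpf (insert j S) = dpf S := by
            funext k
            by_cases hk : k ∈ T
            · simp [hdpf, hk]
            · have hkj : k ≠ j := fun e => hk (e ▸ hjT)
              simp [hdpf, hk, Finset.mem_insert, hkj]
          rw [this]; exact ih
        · have hupd : dpf (insert j S) = Function.update (dpf S) j (ordTB v u) := by
            funext k
            by_cases hkj : k = j
            · subst hkj
              simp [hdpf, Function.update_self, hjT]
            · rw [Function.update_of_ne hkj]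
              by_cases hk : k ∈ T
              · simp [hdpf, hk]
              · simp [hdpf, hk, Finset.mem_insert, hkj]
          rw [hupd]
          rcases step hSTP j (ordTB v u) ih with h | ⟨h1, _⟩
          · exact h
          · exfalso
            set w' := f (Function.update (dpf S) j (ordTB v u)) with hw'
            -- h1 : (dpf S j).1 u w', with dpf S j = ord2 v u
            have hdj : dpf S j = ord2 v u := by simp [hdpf, hjT, hj]
            rw [hdj] at h1
            have hne_u : w' ≠ u := (pref_ne h1).symm
            have hne_v : w' ≠ v := by
              intro e
              have := sOrd_le h1
              simp [huv, e, Ne.symm huv] at this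
            -- PAR with protector v kills w'
            refine par hSTP hUNM (v := v) (d := w') ?_ (fun k => ?_) rfl
            · exact Ne.symm hne_v
            · by_cases hkj : k = j
              · subst hkj
                rw [Function.update_self]
                apply sOrd_lt
                simp [huv, Ne.symm huv, hne_u, hne_v]
              · rw [Function.update_of_ne hkj]
                by_cases hk : k ∈ T
                · simp only [hdpf, if_pos hk]
                  apply sOrd_lt
                  simp [huv, Ne.symm huv, hne_u, hne_v]
                · by_cases hkS : k ∈ S
                  · simp only [hdpf, if_neg hk, if_pos hkS]
                    apply sOrd_lt
                    simp [huv, Ne.symm huv, hne_u, hne_v]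
                  · simp only [hdpf, if_neg hk, if_neg hkS]
                    apply sOrd_lt
                    simp [huv, Ne.symm huv, hne_u, hne_v]
  -- spread
  intro y hy
  refine mm hSTP (hdesc Finset.univ) ?_
  intro j w' hw'
  by_cases hjT : j ∈ T
  · simp only [hdpf, if_pos hjT] at hw'
    exact hy j hjT w' (pref_ne hw').symm
  · simp only [hdpf, if_neg hjT, Finset.mem_univ, if_pos] at hw'
    exact absurd hw' (ordTB_u_no huv w')

/-- Three distinguished alternatives on top, in order. -/
noncomputable def ord3 (x y z : A) : Pref A :=
  sOrd (fun t => if t = x then 0 else if t = y then 1 else if t = z then 2 else 3)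

/-- Decisive over one alternative implies decisive over all. -/
lemma oneToAll (hSTP : StrategyProof f) (hUNM : Unanimous f) (hA : 3 ≤ Cardinal.mk A)
    {T : Set (Fin N)} {u : A} (hT : DecisiveOver f T u) : Decisive f T := by
  intro w
  by_cases hwu : w = u
  · subst hwu; exact hT
  obtain ⟨v, hvw, hvu⟩ := Cardinal.three_le hA w u
  rcases can_mem hSTP hUNM (Ne.symm hvw) (T := T) (u := w) (v := v) with h | h
  · exact main hSTP hUNM (Ne.symm hvw) h
  · exfalso
    have hflip : f (can Tᶜ v w) = v := by rw [← can_flip]; exact h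
    have hTc : DecisiveOver f Tᶜ v := main hSTP hUNM hvw hflip
    set y : Profile A N := fun k => if k ∈ T then ordTop u else ordTop v with hy
    have hyu : f y = u := hT y (fun k hk => by simp only [hy, if_pos hk]; exact ordTop_top u)
    have hyv : f y = v := hTc y (fun k hk => by
      simp only [hy, if_neg (Set.notMem_of_mem_compl hk)]; exact ordTop_top v)
    exact hvu (hyv.symm.trans hyu)

end GSAux

/-- **Contraction lemma**: a decisive group with at least two members has a decisive
proper subset. -/
theorem contraction_lemma {A : Type*} {N : ℕ} (hA : 3 ≤ Cardinal.mk A)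
    (f : Profile A N → A) (hUNM : Unanimous f) (hSTP : StrategyProof f)
    (G : Set (Fin N)) (hG : 2 ≤ G.ncard) (hdec : Decisive f G) :
    ∃ G' : Set (Fin N), G' ⊂ G ∧ Decisive f G' := by
  classical
  have hfin : G.Finite := Set.toFinite G
  have h1lt : 1 < G.ncard := lt_of_lt_of_le one_lt_two hG
  obtain ⟨i, hi, j, hj, hij⟩ := (Set.one_lt_ncard hfin).1 h1lt
  obtain ⟨a, b, hab⟩ := Cardinal.two_le_iff.1 (le_trans (by norm_num) hA)
  obtain ⟨c, hca, hcb⟩ := Cardinal.three_le hA a b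
  have hiG : ({i} : Set (Fin N)) ⊂ G := by
    constructor
    · simpa using hi
    · intro hsub
      have hji := hsub hj
      simp only [Set.mem_singleton_iff] at hji
      exact hij (hji ▸ rfl)
  have hG2 : (G \ {i}) ⊂ G := by
    constructor
    · exact Set.diff_subset
    · intro hsub
      have := hsub hi
      simp at this
  rcases GSAux.can_mem hSTP hUNM (Ne.symm hca) (T := ({i} : Set (Fin N))) (u := a) (v := c)
    with h1 | h1
  · exact ⟨{i}, hiG, GSAux.oneToAll hSTP hUNM hA (GSAux.main hSTP hUNM (Ne.symm hca) h1)⟩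
  have H1 : Decisive f (({i} : Set (Fin N))ᶜ) :=
    GSAux.oneToAll hSTP hUNM hA
      (GSAux.main hSTP hUNM hca (by rw [← GSAux.can_flip]; exact h1))
  rcases GSAux.can_mem hSTP hUNM hcb (T := G \ {i}) (u := c) (v := b) with h2 | h2
  · exact ⟨G \ {i}, hG2, GSAux.oneToAll hSTP hUNM hA (GSAux.main hSTP hUNM hcb h2)⟩
  have H2 : Decisive f ((G \ {i})ᶜ) :=
    GSAux.oneToAll hSTP hUNM hA
      (GSAux.main hSTP hUNM (Ne.symm hcb) (by rw [← GSAux.can_flip]; exact h2))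
  exfalso
  -- the Arrow-style three-group profile
  set z : Profile A N := fun k =>
    if k = i then GSAux.ord3 a b c else if k ∈ G then GSAux.ord3 c a b else GSAux.ord3 b c a
    with hz
  have hka : f z ≠ a := by
    refine GSAux.kill hSTP (H1 c) (z := z) ?_ hca
    intro k hk
    have hki : k ≠ i := by simpa using hk
    by_cases hkG : k ∈ G
    · simp only [hz, if_neg hki, if_pos hkG, GSAux.ord3]
      apply GSAux.sOrd_lt
      simp [Ne.symm hca]
    · simp only [hz, if_neg hki, if_neg hkG, GSAux.ord3]
      apply GSAux.sOrd_lt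
      simp [hcb, hab, Ne.symm hca]
  have hkb : f z ≠ b := by
    refine GSAux.kill hSTP (hdec a) (z := z) ?_ hab
    intro k hk
    by_cases hki : k = i
    · simp only [hz, if_pos hki, GSAux.ord3]
      apply GSAux.sOrd_lt
      simp [Ne.symm hab]
    · simp only [hz, if_neg hki, if_pos hk, GSAux.ord3]
      apply GSAux.sOrd_lt
      simp [Ne.symm hca, Ne.symm hcb, Ne.symm hab]
  have hkc : f z ≠ c := by
    refine GSAux.kill hSTP (H2 b) (z := z) ?_ (Ne.symm hcb)
    intro k hk
    have hk' : k ∈ G → k = i := by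
      intro hkG
      by_contra hki
      exact hk ⟨hkG, by simpa using hki⟩
    by_cases hki : k = i
    · simp only [hz, if_pos hki, GSAux.ord3]
      apply GSAux.sOrd_lt
      simp [Ne.symm hab, hca, hcb]
    · have hkG : k ∉ G := fun h => hki (hk' h)
      simp only [hz, if_neg hki, if_neg hkG, GSAux.ord3]
      apply GSAux.sOrd_lt
      simp [hcb]
  -- every alternative is excluded: contradiction via Pareto with protector a
  have hall : ∀ k, (z k).1 a (f z) := by
    intro k
    have hka' := hka
    have hkb' := hkb
    have hkc' := hkc
    revert hka' hkb' hkc'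
    generalize f z = w
    intro hka' hkb' hkc'
    by_cases hki : k = i
    · simp only [hz, if_pos hki, GSAux.ord3]
      apply GSAux.sOrd_lt
      simp [hka', hkb', hkc']
    · by_cases hkG : k ∈ G
      · simp only [hz, if_neg hki, if_pos hkG, GSAux.ord3]
        apply GSAux.sOrd_lt
        simp [Ne.symm hca, hka', hkb', hkc']
      · simp only [hz, if_neg hki, if_neg hkG, GSAux.ord3]
        apply GSAux.sOrd_lt
        simp [hab, Ne.symm hca, hka', hkb', hkc']
  exact GSAux.par hSTP hUNM (fun e => hka e.symm) hall rfl
end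

section
/- Let A be a set of alternatives with |A| ≥ 3, let X be the set of strict linear orders on A, let I = {1,...,N}, and let f : X^N → A be a social choice function that is unanimous and strategy-proof. If a group G ⊆ I is decisive over some alternative a ∈ A, then G is decisive (over every alternative). -/
open Function

section GSAux

variable {A : Type*} {N : ℕ}

noncomputable def basePref (A : Type*) : Pref A := ⟨WellOrderingRel, inferInstance⟩

lemma Pref.irrefl' (p : Pref A) (u : A) : ¬ p.1 u u := by
  haveI := p.2; exact _root_.irrefl u

lemma Pref.trans' (p : Pref A) {u v w : A} (h1 : p.1 u v) (h2 : p.1 v w) : p.1 u w := by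
  haveI := p.2; exact _root_.trans h1 h2

lemma Pref.trichotomy (p : Pref A) (u v : A) : p.1 u v ∨ u = v ∨ p.1 v u := by
  haveI := p.2; exact trichotomous u v

/-- A preference built from a score function (lower score = better), ties broken by `basePref`. -/
noncomputable def mkPref (s : A → ℕ) : Pref A :=
  ⟨fun u v => s u < s v ∨ (s u = s v ∧ (basePref A).1 u v), by
    haveI hB := (basePref A).2
    refine { trichotomous := ?_, irrefl := ?_, trans := ?_ }
    · intro u v hn1 hn2
      rcases Nat.lt_trichotomy (s u) (s v) with h | h | h
      · exact absurd (Or.inl h) hn1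
      · rcases Pref.trichotomy (basePref A) u v with hb | hb | hb
        · exact absurd (Or.inr ⟨h, hb⟩) hn1
        · exact hb
        · exact absurd (Or.inr ⟨h.symm, hb⟩) hn2
      · exact absurd (Or.inl h) hn2
    · intro u h
      rcases h with h | ⟨-, h⟩
      · omega
      · exact Pref.irrefl' (basePref A) u h
    · rintro u v w (h1 | ⟨e1, b1⟩) (h2 | ⟨e2, b2⟩)
      · exact Or.inl (by omega)
      · exact Or.inl (by omega)
      · exact Or.inl (by omega)
      · exact Or.inr ⟨by omega, Pref.trans' (basePref A) b1 b2⟩⟩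

lemma mkPref_rel (s : A → ℕ) (u v : A) :
    (mkPref s).1 u v ↔ s u < s v ∨ (s u = s v ∧ (basePref A).1 u v) := Iff.rfl

lemma mkPref_of_lt {s : A → ℕ} {u v : A} (h : s u < s v) : (mkPref s).1 u v := Or.inl h

lemma resolve {s : A → ℕ} {u v : A} (h : ¬ (mkPref s).1 u v) : s v ≤ s u := by
  by_contra h2
  exact h (Or.inl (by omega))

/-- score for x ≻ y ≻ z ≻ (everything else). -/
noncomputable def sc3 (x y z u : A) : ℕ :=
  letI := Classical.decEq A
  if u = x then 0 else if u = y then 1 else if u = z then 2 else 3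

/-- score for x ≻ y ≻ (everything else) ≻ bot. -/
noncomputable def scB (x y bot u : A) : ℕ :=
  letI := Classical.decEq A
  if u = x then 0 else if u = y then 1 else if u = bot then 9 else 3

lemma sc3_x (x y z : A) : sc3 x y z x = 0 := by
  unfold sc3; simp

lemma sc3_y {x y : A} (z : A) (h : y ≠ x) : sc3 x y z y = 1 := by
  unfold sc3; simp [h]

lemma sc3_z {x y z : A} (h1 : z ≠ x) (h2 : z ≠ y) : sc3 x y z z = 2 := by
  unfold sc3; simp [h1, h2]

lemma sc3_pos {x y z u : A} (h : u ≠ x) : 1 ≤ sc3 x y z u := by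
  unfold sc3; simp only [h, if_false, if_neg]; split_ifs <;> omega

lemma sc3_ge2 {x y z u : A} (h1 : u ≠ x) (h2 : u ≠ y) : 2 ≤ sc3 x y z u := by
  unfold sc3; simp only [h1, h2, if_false, if_neg]; split_ifs <;> omega

lemma sc3_ge3 {x y z u : A} (h1 : u ≠ x) (h2 : u ≠ y) (h3 : u ≠ z) : 3 ≤ sc3 x y z u := by
  unfold sc3; simp only [h1, h2, h3, if_false, if_neg]; omega

lemma scB_x (x y bot : A) : scB x y bot x = 0 := by
  unfold scB; simp

lemma scB_y {x y : A} (bot : A) (h : y ≠ x) : scB x y bot y = 1 := by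
  unfold scB; simp [h]

lemma scB_bot {x y bot : A} (h1 : bot ≠ x) (h2 : bot ≠ y) : scB x y bot bot = 9 := by
  unfold scB; simp [h1, h2]

lemma scB_pos {x y bot u : A} (h : u ≠ x) : 1 ≤ scB x y bot u := by
  unfold scB; simp only [h, if_false, if_neg]; split_ifs <;> omega

lemma scB_ge3 {x y bot u : A} (h1 : u ≠ x) (h2 : u ≠ y) : 3 ≤ scB x y bot u := by
  unfold scB; simp only [h1, h2, if_false, if_neg]; split_ifs <;> omega

lemma scB_le9 (x y bot u : A) : scB x y bot u ≤ 9 := by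
  unfold scB; split_ifs <;> omega

lemma scB_eq9 {x y bot u : A} (h : scB x y bot u = 9) : u = bot := by
  by_contra hb
  unfold scB at h
  simp only [if_neg hb] at h
  split_ifs at h <;> omega

/-- Flip voters one at a time from profile `x` to profile `y`, maintaining invariant `P`. -/
lemma chain (f : Profile A N → A) (P : A → Prop) (x y : Profile A N)
    (h0 : P (f x))
    (hstep : ∀ (p : Profile A N) (i : Fin N), (∀ j, p j = x j ∨ p j = y j) → p i = x i →
      P (f p) → P (f (Function.update p i (y i)))) :
    P (f y) := by
  have key : ∀ k : ℕ, k ≤ N → P (f (fun i => if i.val < k then y i else x i)) := by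
    intro k
    induction k with
    | zero =>
      intro _
      have hx : (fun i : Fin N => if i.val < 0 then y i else x i) = x := by
        funext j; simp
      rw [hx]; exact h0
    | succ n ih =>
      intro hn
      have hlt : n < N := hn
      have hp := ih (Nat.le_of_succ_le hn)
      have heq : (fun i : Fin N => if i.val < n + 1 then y i else x i)
          = Function.update (fun i : Fin N => if i.val < n then y i else x i) ⟨n, hlt⟩
              (y ⟨n, hlt⟩) := by
        funext j
        by_cases hj : j = ⟨n, hlt⟩
        · subst hj; simp
        · have hjv : j.val ≠ n := fun h => hj (Fin.ext h)
          rw [Function.update_of_ne hj]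
          by_cases h1 : j.val < n
          · rw [if_pos h1, if_pos (by omega)]
          · rw [if_neg h1, if_neg (by omega)]
      rw [heq]
      refine hstep _ ⟨n, hlt⟩ (fun j => ?_) ?_ hp
      · by_cases h1 : j.val < n
        · right; rw [if_pos h1]
        · left; rw [if_neg h1]
      · simp
  have hN := key N le_rfl
  have hy : (fun i : Fin N => if i.val < N then y i else x i) = y := by
    funext j; rw [if_pos j.isLt]
  rwa [hy] at hN

lemma sp_old {f : Profile A N → A} (hSTP : StrategyProof f) (p : Profile A N) (i : Fin N)
    (r : Pref A) : ¬ (p i).1 (f (Function.update p i r)) (f p) := hSTP p i r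

lemma sp_new {f : Profile A N → A} (hSTP : StrategyProof f) (p : Profile A N) (i : Fin N)
    (r : Pref A) : ¬ r.1 (f p) (f (Function.update p i r)) := by
  have h := hSTP (Function.update p i r) i (p i)
  unfold ManipulableAt at h
  rwa [show Function.update p i r i = r from Function.update_self (f := p) (a := i) (v := r),
    show Function.update (Function.update p i r) i (p i) = p from
      (Function.update_idem (f := p) (a := i) (v := r) (w := p i)).trans
        (Function.update_eq_self i p)] at h

/-- Monotonicity: if every voter's lower contour set of the winner weakly grows, the winner
is unchanged. -/
lemma mm {f : Profile A N → A} (hSTP : StrategyProof f) (x y : Profile A N)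
    (h : ∀ i v, (x i).1 (f x) v → (y i).1 (f x) v) : f y = f x := by
  refine chain f (fun w => w = f x) x y rfl ?_
  intro p i hbet hpi hfp
  have c1 := sp_old hSTP p i (y i)
  have c2 := sp_new hSTP p i (y i)
  rw [hfp, hpi] at c1
  rw [hfp] at c2
  rcases Pref.trichotomy (x i) (f (Function.update p i (y i))) (f x) with h1 | h1 | h1
  · exact absurd h1 c1
  · exact h1
  · exact absurd (h i _ h1) c2

/-- Pareto: if `v` is unanimously ranked above `w`, then `w` is not selected. -/
lemma pareto {f : Profile A N → A} (hUNM : Unanimous f) (hSTP : StrategyProof f)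
    (x : Profile A N) (v w : A) (hvw : v ≠ w) (h : ∀ i, (x i).1 v w) : f x ≠ w := by
  intro hfx
  classical
  set y : Profile A N := fun _ =>
    mkPref (fun u => if u = v then 0 else if u = w then 1 else 2) with hy
  have hyx : f y = f x := by
    refine mm hSTP x y ?_
    intro i u hu
    rw [hfx] at hu
    have huw : u ≠ w := by rintro rfl; exact Pref.irrefl' (x i) _ hu
    have huv : u ≠ v := by
      rintro rfl
      exact Pref.irrefl' (x i) _ (Pref.trans' (x i) hu (h i))
    rw [hfx]
    refine mkPref_of_lt ?_
    simp only [if_neg (Ne.symm hvw), if_pos, if_neg huv, if_neg huw]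
    simp
  have hyv : f y = v := by
    refine hUNM v y (fun i _ => ?_)
    intro u hu
    refine mkPref_of_lt ?_
    simp only [if_pos, if_neg hu]
    split_ifs <;> omega
  rw [hfx] at hyx
  exact hvw (hyv.symm.trans hyx)

/-- The engine: since `G` is decisive over `a`, no alternative `w ≠ a` that all members of `G`
rank below `a` can ever be selected. -/
lemma engine {f : Profile A N → A} (hSTP : StrategyProof f) {G : Set (Fin N)} {a : A}
    (hdec : DecisiveOver f G a) (V : Profile A N) (w : A) (hw : w ≠ a)
    (hG : ∀ i ∈ G, (V i).1 a w) : f V ≠ w := by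
  intro hfV
  classical
  set W : Profile A N := fun i =>
    if i ∈ G then mkPref (fun u => if u = a then 0 else if u = w then 1 else 2)
    else mkPref (fun u => if u = w then 0 else 1) with hW
  have hWV : f W = f V := by
    refine mm hSTP V W ?_
    intro i u hu
    rw [hfV] at hu
    have huw : u ≠ w := by rintro rfl; exact Pref.irrefl' (V i) _ hu
    rw [hfV]
    by_cases hi : i ∈ G
    · have hua : u ≠ a := by
        rintro rfl
        exact Pref.irrefl' (V i) _ (Pref.trans' (V i) hu (hG i hi))
      simp only [hW, if_pos hi]
      refine mkPref_of_lt ?_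
      simp only [if_neg hw, if_pos, if_neg hua, if_neg huw]
      simp
    · simp only [hW, if_neg hi]
      refine mkPref_of_lt ?_
      simp only [if_pos, if_neg huw]
      simp
  have hWa : f W = a := by
    refine hdec W (fun i hi => ?_)
    intro u hu
    simp only [hW, if_pos hi]
    refine mkPref_of_lt ?_
    simp only [if_pos, if_neg hu]
    split_ifs <;> omega
  rw [hfV] at hWV
  exact hw (hWV.symm.trans hWa)

/-- The profile where members of `G` report `P` and the others report `Q`. -/
noncomputable def twoProf (G : Set (Fin N)) (P Q : Pref A) : Profile A N := fun i =>
  letI := Classical.dec (i ∈ G)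
  if i ∈ G then P else Q

lemma twoProf_mem {G : Set (Fin N)} {P Q : Pref A} {i : Fin N} (hi : i ∈ G) :
    twoProf G P Q i = P := by
  unfold twoProf; simp [hi]

lemma twoProf_not {G : Set (Fin N)} {P Q : Pref A} {i : Fin N} (hi : i ∉ G) :
    twoProf G P Q i = Q := by
  unfold twoProf; simp [hi]

lemma noop_step {f : Profile A N → A} (p : Profile A N) (i : Fin N) (P : A → Prop)
    (r : Pref A) (hpr : p i = r) (hP : P (f p)) : P (f (Function.update p i r)) := by
  rw [← hpr, show Function.update p i (p i) = p from Function.update_eq_self i p]; exact hP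

end GSAux

/-- If a group is decisive over some alternative, it is decisive over every alternative. -/
theorem decisiveOver_implies_decisive {A : Type*} {N : ℕ} (hA : 3 ≤ Cardinal.mk A)
    (f : Profile A N → A) (hUNM : Unanimous f) (hSTP : StrategyProof f)
    (G : Set (Fin N)) (a : A) (hdec : DecisiveOver f G a) :
    Decisive f G := by
  intro b
  by_cases hba : b = a
  · rwa [hba]
  · obtain ⟨c, hca, hcb⟩ := Cardinal.three_le hA a b
    have hab : a ≠ b := Ne.symm hba
    have hbc : b ≠ c := Ne.symm hcb
    have hac : a ≠ c := Ne.symm hca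
    -- six rankings
    set A1 : Pref A := mkPref (sc3 a b c) with hA1   -- a ≻ b ≻ c ≻ rest
    set B1 : Pref A := mkPref (sc3 b a c) with hB1   -- b ≻ a ≻ c ≻ rest
    set B2 : Pref A := mkPref (sc3 b c a) with hB2   -- b ≻ c ≻ a ≻ rest
    set C2 : Pref A := mkPref (sc3 c b a) with hC2   -- c ≻ b ≻ a ≻ rest
    set A0 : Pref A := mkPref (scB a c b) with hA0   -- a ≻ c ≻ rest ≻ b
    set C1 : Pref A := mkPref (scB c a b) with hC1   -- c ≻ a ≻ rest ≻ b
    have hB1ac : B1.1 a c :=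
      mkPref_of_lt (by rw [sc3_y c hab, sc3_z hcb hca]; omega)
    -- Step A : the all-`a`-top-for-G profile selects a
    have hz0 : f (twoProf G A1 A0) = a := by
      refine hdec _ (fun i hi => ?_)
      intro u hu
      rw [twoProf_mem hi]
      exact mkPref_of_lt (by rw [sc3_x]; have := sc3_pos (y := b) (z := c) hu; omega)
    -- Step B : the key profile z = (G : b≻a≻c≻rest, ¬G : a≻c≻rest≻b) selects a or b
    have hzab : f (twoProf G B1 A0) = a ∨ f (twoProf G B1 A0) = b := by
      refine chain f (fun w => w = a ∨ w = b) (twoProf G A1 A0) (twoProf G B1 A0)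
        (Or.inl hz0) ?_
      intro p i hbet hpi hfp
      by_cases hi : i ∈ G
      · -- flip A1 → B1
        rw [twoProf_mem hi]
        have c2 := sp_new hSTP p i B1
        rcases hfp with hfa | hfb
        · rw [hfa] at c2
          have hle := resolve c2
          rw [sc3_y c hab] at hle
          by_contra hcon
          push_neg at hcon
          have := sc3_ge2 (z := c) hcon.2 hcon.1
          omega
        · rw [hfb] at c2
          have hle := resolve c2
          rw [sc3_x] at hle
          right
          by_contra h1
          have := sc3_pos (y := a) (z := c) h1
          omega
      · refine noop_step p i (fun w => w = a ∨ w = b) _ ?_ hfp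
        rw [hpi, twoProf_not hi, twoProf_not hi]
    -- Main split
    have hzb : f (twoProf G B1 A0) = b := by
      rcases hzab with hza | hzb
      · exfalso
        -- Step 2 : f X1 = a where X1 = (G : B1, ¬G : C1)
        have hX1a : f (twoProf G B1 C1) = a := by
          refine chain f (fun w => w = a) (twoProf G B1 A0) (twoProf G B1 C1) hza ?_
          intro p i hbet hpi hfp
          by_cases hi : i ∈ G
          · refine noop_step p i (fun w => w = a) _ ?_ hfp
            rw [hpi, twoProf_mem hi, twoProf_mem hi]
          · rw [twoProf_not hi]
            have c2 := sp_new hSTP p i C1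
            rw [hfp] at c2
            have hle := resolve c2
            rw [scB_y b hac] at hle
            have hmem : f (Function.update p i C1) = a ∨ f (Function.update p i C1) = c := by
              by_contra hcon
              push_neg at hcon
              have := scB_ge3 (bot := b) hcon.2 hcon.1
              omega
            rcases hmem with h | h
            · exact h
            · exfalso
              refine engine hSTP hdec (Function.update p i C1) c hca ?_ h
              intro j hj
              have hji : j ≠ i := fun e => hi (e ▸ hj)
              rw [show Function.update p i C1 j = p j from Function.update_of_ne (f := p) hji _]
              have hpj : p j = B1 := by
                rcases hbet j with e | e
                · rw [e, twoProf_mem hj]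
                · rw [e, twoProf_mem hj]
              rw [hpj]
              exact hB1ac
        -- Step 3 : unanimity profile (everyone B1) selects b
        have hX3b : f (twoProf G B1 B1) = b := by
          refine hUNM b _ (fun i _ => ?_)
          intro u hu
          have hBB : twoProf G B1 B1 i = B1 := by
            by_cases hi : i ∈ G
            · exact twoProf_mem hi
            · exact twoProf_not hi
          rw [hBB]
          exact mkPref_of_lt (by rw [sc3_x]; have := sc3_pos (y := a) (z := c) hu; omega)
        -- Step 4 : f X2 = b where X2 = (G : B1, ¬G : C2)
        have hX2b : f (twoProf G B1 C2) = b := by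
          refine chain f (fun w => w = b) (twoProf G B1 B1) (twoProf G B1 C2) hX3b ?_
          intro p i hbet hpi hfp
          by_cases hi : i ∈ G
          · refine noop_step p i (fun w => w = b) _ ?_ hfp
            rw [hpi, twoProf_mem hi, twoProf_mem hi]
          · rw [twoProf_not hi]
            have c2 := sp_new hSTP p i C2
            rw [hfp] at c2
            have hle := resolve c2
            rw [sc3_y a hbc] at hle
            have hmem : f (Function.update p i C2) = b ∨ f (Function.update p i C2) = c := by
              by_contra hcon
              push_neg at hcon
              have := sc3_ge2 (z := a) hcon.2 hcon.1
              omega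
            rcases hmem with h | h
            · exact h
            · exfalso
              refine engine hSTP hdec (Function.update p i C2) c hca ?_ h
              intro j hj
              have hji : j ≠ i := fun e => hi (e ▸ hj)
              rw [show Function.update p i C2 j = p j from Function.update_of_ne (f := p) hji _]
              have hpj : p j = B1 := by
                rcases hbet j with e | e
                · rw [e, twoProf_mem hj]
                · rw [e, twoProf_mem hj]
              rw [hpj]
              exact hB1ac
        -- Step 5 : f X4 = b where X4 = (G : B2, ¬G : C2)
        have hX4b : f (twoProf G B2 C2) = b := by
          refine chain f (fun w => w = b) (twoProf G B1 C2) (twoProf G B2 C2) hX2b ?_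
          intro p i hbet hpi hfp
          by_cases hi : i ∈ G
          · rw [twoProf_mem hi]
            have c2 := sp_new hSTP p i B2
            rw [hfp] at c2
            have hle := resolve c2
            rw [sc3_x] at hle
            by_contra h1
            have := sc3_pos (y := c) (z := a) h1
            omega
          · refine noop_step p i (fun w => w = b) _ ?_ hfp
            rw [hpi, twoProf_not hi, twoProf_not hi]
        -- Step 6 : f X5 ≠ c where X5 = (G : B2, ¬G : C1)
        have hX5nc : f (twoProf G B2 C1) ≠ c := by
          refine chain f (fun w => w ≠ c) (twoProf G B2 C2) (twoProf G B2 C1)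
            (by rw [hX4b]; exact hbc) ?_
          intro p i hbet hpi hfp
          by_cases hi : i ∈ G
          · refine noop_step p i (fun w => w ≠ c) _ ?_ hfp
            rw [hpi, twoProf_mem hi, twoProf_mem hi]
          · rw [twoProf_not hi]
            have c1 := sp_old hSTP p i C1
            rw [hpi, twoProf_not hi] at c1
            intro hc
            apply c1
            rw [hc]
            exact mkPref_of_lt (by rw [sc3_x]; have := sc3_pos (y := b) (z := a) hfp; omega)
        -- Step 7 : f X5 = a ∨ f X5 = c
        have hX5ac : f (twoProf G B2 C1) = a ∨ f (twoProf G B2 C1) = c := by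
          refine chain f (fun w => w = a ∨ w = c) (twoProf G B1 C1) (twoProf G B2 C1)
            (Or.inl hX1a) ?_
          intro p i hbet hpi hfp
          by_cases hi : i ∈ G
          · rw [twoProf_mem hi]
            have c1 := sp_old hSTP p i B2
            rw [hpi, twoProf_mem hi] at c1
            have c2 := sp_new hSTP p i B2
            rcases hfp with hfa | hfc
            · rw [hfa] at c1 c2
              have hwb : f (Function.update p i B2) ≠ b := by
                intro he
                apply c1
                rw [he]
                exact mkPref_of_lt (by rw [sc3_x, sc3_y c hab]; omega)
              have hle := resolve c2
              rw [sc3_z hab hac] at hle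
              by_cases h1 : f (Function.update p i B2) = a
              · exact Or.inl h1
              by_cases h2 : f (Function.update p i B2) = c
              · exact Or.inr h2
              exfalso
              have := sc3_ge3 hwb h2 h1
              omega
            · rw [hfc] at c1 c2
              have hwb : f (Function.update p i B2) ≠ b := by
                intro he
                apply c1
                rw [he]
                exact mkPref_of_lt (by rw [sc3_x, sc3_z hcb hca]; omega)
              have hle := resolve c2
              rw [sc3_y a hcb] at hle
              right
              by_contra h1
              have := sc3_ge2 (z := a) hwb h1
              omega
          · refine noop_step p i (fun w => w = a ∨ w = c) _ ?_ hfp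
            rw [hpi, twoProf_not hi, twoProf_not hi]
        -- Step 8 : contradiction with Pareto (c unanimously above a in X5)
        have hX5a : f (twoProf G B2 C1) = a := by
          rcases hX5ac with h | h
          · exact h
          · exact absurd h hX5nc
        refine pareto hUNM hSTP (twoProf G B2 C1) c a hca ?_ hX5a
        intro i
        by_cases hi : i ∈ G
        · rw [twoProf_mem hi]
          exact mkPref_of_lt (by rw [sc3_y a hcb, sc3_z hab hac]; omega)
        · rw [twoProf_not hi]
          exact mkPref_of_lt (by rw [scB_x, scB_y b hac]; omega)
      · exact hzb
    -- Conclusion : transfer by monotonicity to an arbitrary profile with b on top for G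
    intro x hx
    have hfx : f x = f (twoProf G B1 A0) := by
      refine mm hSTP (twoProf G B1 A0) x ?_
      intro i v hv
      rw [hzb] at hv ⊢
      by_cases hi : i ∈ G
      · rw [twoProf_mem hi] at hv
        have hvb : v ≠ b := by
          intro he
          rw [he] at hv
          exact Pref.irrefl' B1 b hv
        exact hx i hi v hvb
      · rw [twoProf_not hi, hA0, mkPref_rel] at hv
        exfalso
        rcases hv with hlt | ⟨heq, hbase⟩
        · rw [scB_bot hba hbc] at hlt
          have := scB_le9 a c b v
          omega
        · rw [scB_bot hba hbc] at heq
          have hvb : v = b := scB_eq9 heq.symm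
          rw [hvb] at hbase
          exact Pref.irrefl' (basePref A) b hbase
    rw [hfx, hzb]
end

section
/- Let A be a set of alternatives with |A| ≥ 3 containing distinct a, b, let X be the set of strict linear orders on A, let I = {1,...,N}, and let f : X^N → A be a social choice function that is unanimous and strategy-proof. Let G_a and G_b be a partition of I, and let x' ∈ X^N be any profile such that x'_i ranks a first and b second for all i ∈ G_a, and x'_j ranks b first and a second for all j ∈ G_b. Then f(x') ∈ {a, b}. -/
section Aux
variable {A : Type*}

lemma pref_asymm (p : Pref A) {u v : A} (h : p.1 u v) : ¬ p.1 v u := by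
  intro h'
  exact p.2.irrefl u (p.2.trans _ _ _ h h')

lemma second_beats (p : Pref A) {a b : A} (hb : RanksTop p b) (ha : RanksSecond p a)
    (hab : a ≠ b) : ∀ c, c ≠ a → c ≠ b → p.1 a c := by
  obtain ⟨c0, hc0a, hc0r, hall⟩ := ha
  have hc0b : c0 = b := by
    by_contra h
    have h1 : p.1 a b := hall b (Ne.symm hab) (fun e => h e.symm)
    exact pref_asymm p h1 (hb a hab)
  intro c hca hcb
  exact hall c hca (hc0b ▸ hcb)

variable [DecidableEq A]

def swapPref (a b : A) (p : Pref A) : Pref A :=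
  ⟨fun u v => p.1 (Equiv.swap a b u) (Equiv.swap a b v),
   { trichotomous := fun u v => by
      exact fun h1 h2 => (Equiv.swap a b).injective (p.2.trichotomous _ _ h1 h2)
     irrefl := fun u => p.2.irrefl _
     trans := fun u v w h h' => p.2.trans _ _ _ h h' }⟩

lemma swapPref_top {a b : A} (p : Pref A) (hab : a ≠ b) (hb : RanksTop p b) :
    RanksTop (swapPref a b p) a := by
  intro c hc
  show p.1 (Equiv.swap a b a) (Equiv.swap a b c)
  rw [Equiv.swap_apply_left]
  apply hb
  intro h
  apply hc
  have h2 := congrArg (Equiv.swap a b) h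
  simpa using h2

end Aux

/-- If `I` is partitioned into `Ga` and `Gb`, everyone in `Ga` ranks `a` first and `b`
second, and everyone in `Gb` ranks `b` first and `a` second, then `f` chooses `a` or `b`. -/


theorem choice_in_pair {A : Type*} {N : ℕ} (hA : 3 ≤ Cardinal.mk A)
    (a b : A) (hab : a ≠ b)
    (f : Profile A N → A) (hUNM : Unanimous f) (hSTP : StrategyProof f)
    (Ga Gb : Set (Fin N)) (hcover : Ga ∪ Gb = Set.univ) (hdisj : Ga ∩ Gb = ∅)
    (x' : Profile A N)
    (ha : ∀ i ∈ Ga, RanksTop (x' i) a ∧ RanksSecond (x' i) b)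
    (hb : ∀ j ∈ Gb, RanksTop (x' j) b ∧ RanksSecond (x' j) a) :
    f x' = a ∨ f x' = b := by
  classical
  let x'' : Profile A N := fun i => if i ∈ Gb then swapPref a b (x' i) else x' i
  have htop : ∀ i, RanksTop (x'' i) a := by
    intro i
    by_cases hGb : i ∈ Gb
    · simp only [x'', if_pos hGb]
      exact swapPref_top (x' i) hab (hb i hGb).1
    · have hGa : i ∈ Ga := by
        have hiu : i ∈ Ga ∪ Gb := hcover ▸ Set.mem_univ i
        exact hiu.resolve_right hGb
      simp only [x'', if_neg hGb]
      exact (ha i hGa).1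
  let y : Finset (Fin N) → Profile A N := fun S i => if i ∈ S ∧ i ∈ Gb then x' i else x'' i
  have key : ∀ S : Finset (Fin N), f (y S) = a ∨ f (y S) = b := by
    intro S
    induction S using Finset.induction_on with
    | empty =>
      left
      apply hUNM a
      intro i _
      simpa [y] using htop i
    | @insert j S hjS IH =>
      by_cases hGb : j ∈ Gb
      · have hupd : Function.update (y (insert j S)) j (x'' j) = y S := by
          funext i
          by_cases hij : i = j
          · subst hij
            simp [y, Function.update_self, hjS]
          · simp [y, Function.update_of_ne hij, Finset.mem_insert, hij]
        have hyj : y (insert j S) j = x' j := by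
          simp [y, Finset.mem_insert, hGb]
        have hsp := hSTP (y (insert j S)) j (x'' j)
        unfold ManipulableAt at hsp
        rw [hupd, hyj] at hsp
        by_contra hcon
        push_neg at hcon
        apply hsp
        rcases IH with h1 | h1 <;> rw [h1]
        · exact second_beats (x' j) (hb j hGb).1 (hb j hGb).2 hab
            (f (y (insert j S))) hcon.1 hcon.2
        · exact (hb j hGb).1 (f (y (insert j S))) hcon.2
      · have : y (insert j S) = y S := by
          funext i
          by_cases hij : i = j
          · subst hij; simp [y, hGb]
          · simp [y, Finset.mem_insert, hij]
        rw [this]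
        exact IH
  have hx' : x' = y Finset.univ := by
    funext i
    by_cases hGb : i ∈ Gb
    · simp [y, hGb]
    · simp [y, hGb, x'']
  rw [hx']
  exact key Finset.univ
end
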